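/- Let n ≥ 1 and let i_1, i_2, ..., i_l ∈ [n-1] be any finite sequence (in particular, a reduced word of any w ∈ S_n). Then the image of the composition π_{i_1} ∘ π_{i_2} ∘ ⋯ ∘ π_{i_l} : ASM(n) → ASM(n), equipped with the order induced from the Bruhat order on ASM(n), is a lattice; moreover, the join in ASM(n) of any two elements of this image again lies in the image, and the identity matrix is its minimum element. -/

import Mathlib

/-- The rank (corner sum) matrix entry `r_A(i,j)` (1-based `i j`, zero when `i = 0` or `j = 0`). -/
def rk (n : ℕ) (A : Matrix (Fin n) (Fin n) ℤ) (i j : ℕ) : ℤ :=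
  ∑ p : Fin n, ∑ q : Fin n, if p.1 < i ∧ q.1 < j then A p q else 0

/-- `A` is an alternating sign matrix: entries in `{-1,0,1}`, the nonzero entries of each row
and column alternate in sign and sum to `1`; equivalently all partial row and column sums are
`0` or `1` and every full row and column sums to `1`. -/
def IsASM (n : ℕ) (A : Matrix (Fin n) (Fin n) ℤ) : Prop :=
  (∀ i j, A i j = -1 ∨ A i j = 0 ∨ A i j = 1) ∧
  (∀ i : Fin n, ∀ j : ℕ, j ≤ n →
      (∑ q : Fin n, if q.1 < j then A i q else 0) = 0 ∨
      (∑ q : Fin n, if q.1 < j then A i q else 0) = 1) ∧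
  (∀ j : Fin n, ∀ i : ℕ, i ≤ n →
      (∑ p : Fin n, if p.1 < i then A p j else 0) = 0 ∨
      (∑ p : Fin n, if p.1 < i then A p j else 0) = 1) ∧
  (∀ i : Fin n, (∑ q : Fin n, A i q) = 1) ∧
  (∀ j : Fin n, (∑ p : Fin n, A p j) = 1)

/-- `A ∈ ASM^I(n)`: `A` is an ASM and for every `i ∈ I` and `j ∈ [n]`,
`r_A(i,j) = r_A(i-1,j) + 1` or `r_A(i,j) = r_A(i+1,j)`. -/
def InASMI (n : ℕ) (I : Finset ℕ) (A : Matrix (Fin n) (Fin n) ℤ) : Prop :=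
  IsASM n A ∧ ∀ i ∈ I, ∀ j, 1 ≤ j → j ≤ n →
    rk n A i j = rk n A (i - 1) j + 1 ∨ rk n A i j = rk n A (i + 1) j

/-- Bruhat order on `ASM(n)`: `A ≤ B` iff `r_A(i,j) ≥ r_B(i,j)` for all `i,j ∈ [n]`. -/
def blE (n : ℕ) (A B : Matrix (Fin n) (Fin n) ℤ) : Prop :=
  ∀ i j, 1 ≤ i → i ≤ n → 1 ≤ j → j ≤ n → rk n B i j ≤ rk n A i j

/-- Permutation matrix of `w`. -/
def permMatrix (n : ℕ) (w : Equiv.Perm (Fin n)) : Matrix (Fin n) (Fin n) ℤ :=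
  Matrix.of fun i j => if w i = j then 1 else 0

/-- `w ∈ S_n^I`: `w(i) < w(i+1)` for all `i ∈ I` (indices 1-based). -/
def IsMinRep (n : ℕ) (I : Finset ℕ) (w : Equiv.Perm (Fin n)) : Prop :=
  ∀ p q : Fin n, (p.1 + 1) ∈ I → q.1 = p.1 + 1 → w p < w q

/-- Identity matrix. -/
def idMat (n : ℕ) : Matrix (Fin n) (Fin n) ℤ :=
  Matrix.of fun i j => if i = j then 1 else 0

namespace Aux18
open Matrix

lemma sum_if_lt_succ {n : ℕ} (v : Fin n → ℤ) {i : ℕ} (hi : i < n) :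
    (∑ p : Fin n, if p.1 < i + 1 then v p else 0)
      = (∑ p : Fin n, if p.1 < i then v p else 0) + v ⟨i, hi⟩ := by
  have key : ∀ p : Fin n, (if p.1 < i + 1 then v p else 0)
      = (if p.1 < i then v p else 0) + (if p = ⟨i, hi⟩ then v p else 0) := by
    intro p
    rcases eq_or_ne p ⟨i, hi⟩ with h | h
    · subst h; simp
    · have hpi : p.1 ≠ i := fun hh => h (Fin.ext hh)
      have h2 : (p.1 < i + 1) ↔ (p.1 < i) := by omega
      simp [h, h2]
  rw [Finset.sum_congr rfl (fun p _ => key p), Finset.sum_add_distrib,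
    Finset.sum_ite_eq' Finset.univ (⟨i, hi⟩ : Fin n) v]
  simp

lemma telescope {n : ℕ} (u : ℕ → ℤ) (j : ℕ) :
    (∑ q : Fin n, if q.1 < j then (u (q.1 + 1) - u q.1) else 0) = u (min j n) - u 0 := by
  induction j with
  | zero => simp
  | succ j ih =>
    rcases lt_or_ge j n with hj | hj
    · rw [sum_if_lt_succ (fun q : Fin n => u (q.1 + 1) - u q.1) hj, ih]
      have h1 : min j n = j := by omega
      have h2 : min (j + 1) n = j + 1 := by omega
      rw [h1, h2]; ring
    · have h2 : min (j + 1) n = min j n := by omega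
      rw [h2, ← ih]
      refine Finset.sum_congr rfl fun q _ => ?_
      have := q.2
      have : (q.1 < j + 1) ↔ (q.1 < j) := by omega
      rw [if_congr this rfl rfl]

variable {n : ℕ} (A B C : Matrix (Fin n) (Fin n) ℤ)

lemma rk_rows (i j : ℕ) :
    rk n A i j = ∑ p : Fin n, if p.1 < i then (∑ q : Fin n, if q.1 < j then A p q else 0) else 0 := by
  unfold rk
  refine Finset.sum_congr rfl fun p _ => ?_
  by_cases h : p.1 < i
  · simp [h]
  · simp [h]

lemma rk_zero_left (j : ℕ) : rk n A 0 j = 0 := by simp [rk]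

lemma rk_zero_right (i : ℕ) : rk n A i 0 = 0 := by simp [rk]

lemma rk_succ_row {i : ℕ} (hi : i < n) (j : ℕ) :
    rk n A (i + 1) j = rk n A i j + ∑ q : Fin n, if q.1 < j then A ⟨i, hi⟩ q else 0 := by
  rw [rk_rows, rk_rows, sum_if_lt_succ _ hi]

lemma rk_cap_row {i : ℕ} (hi : n ≤ i) (j : ℕ) : rk n A i j = rk n A n j := by
  unfold rk
  refine Finset.sum_congr rfl fun p _ => ?_
  have h1 : p.1 < i := by have := p.2; omega
  simp only [h1, p.2, true_and]

lemma rk_transpose (i j : ℕ) : rk n Aᵀ i j = rk n A j i := by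
  unfold rk
  rw [Finset.sum_comm]
  refine Finset.sum_congr rfl fun q _ => Finset.sum_congr rfl fun p _ => ?_
  simp only [Matrix.transpose_apply]
  exact if_congr and_comm rfl rfl

lemma rk_succ_col {j : ℕ} (hj : j < n) (i : ℕ) :
    rk n A i (j + 1) = rk n A i j + ∑ p : Fin n, if p.1 < i then A p ⟨j, hj⟩ else 0 := by
  have h := rk_succ_row Aᵀ hj i
  rw [rk_transpose, rk_transpose] at h
  simpa [Matrix.transpose_apply] using h

lemma rk_cap_col {j : ℕ} (hj : n ≤ j) (i : ℕ) : rk n A i j = rk n A i n := by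
  have h := rk_cap_row Aᵀ hj i
  rwa [rk_transpose, rk_transpose] at h

lemma rk_entry (p q : Fin n) :
    A p q = rk n A (p.1 + 1) (q.1 + 1) - rk n A p.1 (q.1 + 1)
      - rk n A (p.1 + 1) q.1 + rk n A p.1 q.1 := by
  rw [rk_succ_row A p.2 (q.1 + 1), rk_succ_row A p.2 q.1,
    sum_if_lt_succ (fun t : Fin n => A ⟨p.1, p.2⟩ t) q.2]
  simp only [Fin.eta]
  ring

lemma rk_ext (h : ∀ i j, i ≤ n → j ≤ n → rk n A i j = rk n B i j) : A = B := by
  ext p q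
  rw [rk_entry A p q, rk_entry B p q,
    h _ _ p.2 q.2, h _ _ (le_of_lt p.2) q.2, h _ _ p.2 (le_of_lt q.2),
    h _ _ (le_of_lt p.2) (le_of_lt q.2)]


variable {A B C}

lemma isASM_transpose (h : IsASM n A) : IsASM n Aᵀ := by
  obtain ⟨h1, h2, h3, h4, h5⟩ := h
  refine ⟨fun i j => h1 j i, ?_, ?_, h5, h4⟩
  · intro i j hj
    simpa [Matrix.transpose_apply] using h3 i j hj
  · intro j i hi
    simpa [Matrix.transpose_apply] using h2 j i hi

lemma rk_row_step (hA : IsASM n A) {i j : ℕ} (hi : i < n) (hj : j ≤ n) :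
    rk n A i j ≤ rk n A (i + 1) j ∧ rk n A (i + 1) j ≤ rk n A i j + 1 := by
  have h := hA.2.1 ⟨i, hi⟩ j hj
  rw [rk_succ_row A hi j]
  rcases h with h | h <;> rw [h] <;> omega

lemma rk_le_succ_row (hA : IsASM n A) {j : ℕ} (hj : j ≤ n) (i : ℕ) :
    rk n A i j ≤ rk n A (i + 1) j := by
  rcases lt_or_ge i n with hi | hi
  · exact (rk_row_step hA hi hj).1
  · rw [rk_cap_row A hi, rk_cap_row A (by omega : n ≤ i + 1)]

lemma rk_mono_row (hA : IsASM n A) {j : ℕ} (hj : j ≤ n) {i i' : ℕ} (h : i ≤ i') :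
    rk n A i j ≤ rk n A i' j := by
  obtain ⟨d, rfl⟩ := Nat.exists_eq_add_of_le h
  clear h
  induction d with
  | zero => simp
  | succ d ih =>
    calc rk n A i j ≤ rk n A (i + d) j := ih
    _ ≤ rk n A (i + d + 1) j := rk_le_succ_row hA hj (i + d)

lemma rk_col_step (hA : IsASM n A) {i j : ℕ} (hj : j < n) (hi : i ≤ n) :
    rk n A i j ≤ rk n A i (j + 1) ∧ rk n A i (j + 1) ≤ rk n A i j + 1 := by
  have h := rk_row_step (isASM_transpose hA) hj hi
  rwa [rk_transpose, rk_transpose] at h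

lemma rk_le_succ_col (hA : IsASM n A) {i : ℕ} (hi : i ≤ n) (j : ℕ) :
    rk n A i j ≤ rk n A i (j + 1) := by
  have h := rk_le_succ_row (isASM_transpose hA) hi j
  rwa [rk_transpose, rk_transpose] at h

lemma rk_mono_col (hA : IsASM n A) {i : ℕ} (hi : i ≤ n) {j j' : ℕ} (h : j ≤ j') :
    rk n A i j ≤ rk n A i j' := by
  have hh := rk_mono_row (isASM_transpose hA) hi h
  rwa [rk_transpose, rk_transpose] at hh

lemma rk_row_full (hA : IsASM n A) {i : ℕ} (hi : i ≤ n) : rk n A i n = (i : ℤ) := by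
  induction i with
  | zero => simp [rk_zero_left]
  | succ i ih =>
    have hi' : i < n := by omega
    rw [rk_succ_row A hi' n, ih (by omega)]
    have : (∑ q : Fin n, if q.1 < n then A ⟨i, hi'⟩ q else 0) = ∑ q : Fin n, A ⟨i, hi'⟩ q :=
      Finset.sum_congr rfl fun q _ => if_pos q.2
    rw [this, hA.2.2.2.1 ⟨i, hi'⟩]
    push_cast; ring

lemma rk_col_full (hA : IsASM n A) {j : ℕ} (hj : j ≤ n) : rk n A n j = (j : ℤ) := by
  have h := rk_row_full (isASM_transpose hA) hj
  rwa [rk_transpose] at h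

lemma rk_le_min (hA : IsASM n A) {i j : ℕ} (hi : i ≤ n) (hj : j ≤ n) :
    rk n A i j ≤ min (i : ℤ) (j : ℤ) := by
  have h1 : rk n A i j ≤ rk n A i n := rk_mono_col hA hi hj
  have h2 : rk n A i j ≤ rk n A n j := rk_mono_row hA hj hi
  rw [rk_row_full hA hi] at h1
  rw [rk_col_full hA hj] at h2
  omega

lemma rk_nonneg (hA : IsASM n A) {i j : ℕ} (hj : j ≤ n) : 0 ≤ rk n A i j := by
  have := rk_mono_row hA hj (Nat.zero_le i)
  rwa [rk_zero_left] at this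


lemma sum_ind {m : ℕ} (hm : m ≤ n) :
    (∑ p : Fin n, if p.1 < m then (1 : ℤ) else 0) = (m : ℤ) := by
  have h := telescope (n := n) (fun t => (t : ℤ)) m
  have e : ∀ p : Fin n, (if p.1 < m then (1 : ℤ) else 0)
      = (if p.1 < m then (((p.1 + 1 : ℕ) : ℤ) - (p.1 : ℤ)) else 0) := by
    intro p; by_cases hp : p.1 < m <;> simp [hp]
  rw [Finset.sum_congr rfl fun p _ => e p, h]
  have : min m n = m := by omega
  rw [this]; push_cast; ring

lemma isASM_idMat : IsASM n (idMat n) := by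
  have hrow : ∀ (i : Fin n) (j : ℕ),
      (∑ q : Fin n, if q.1 < j then idMat n i q else 0) = if i.1 < j then 1 else 0 := by
    intro i j
    rw [Finset.sum_eq_single i]
    · simp [idMat]
    · intro b _ hb
      simp [idMat, Matrix.of_apply, Ne.symm hb]
    · intro h; exact absurd (Finset.mem_univ i) h
  have hcol : ∀ (j : Fin n) (i : ℕ),
      (∑ p : Fin n, if p.1 < i then idMat n p j else 0) = if j.1 < i then 1 else 0 := by
    intro j i
    rw [Finset.sum_eq_single j]
    · simp [idMat]
    · intro b _ hb
      simp [idMat, Matrix.of_apply, hb]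
    · intro h; exact absurd (Finset.mem_univ j) h
  refine ⟨?_, ?_, ?_, ?_, ?_⟩
  · intro i j; by_cases h : i = j <;> simp [idMat, h]
  · intro i j _; rw [hrow i j]; by_cases h : i.1 < j <;> simp [h]
  · intro j i _; rw [hcol j i]; by_cases h : j.1 < i <;> simp [h]
  · intro i
    have := hrow i n
    rw [Finset.sum_congr rfl fun q _ => if_pos q.2] at this
    rw [this, if_pos i.2]
  · intro j
    have := hcol j n
    rw [Finset.sum_congr rfl fun p _ => if_pos p.2] at this
    rw [this, if_pos j.2]

lemma rk_idMat {i j : ℕ} (hi : i ≤ n) (hj : j ≤ n) :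
    rk n (idMat n) i j = ((min i j : ℕ) : ℤ) := by
  unfold rk
  have e : ∀ p : Fin n,
      (∑ q : Fin n, if p.1 < i ∧ q.1 < j then idMat n p q else 0)
        = if p.1 < min i j then (1 : ℤ) else 0 := by
    intro p
    rw [Finset.sum_eq_single p]
    · by_cases h1 : p.1 < i <;> by_cases h2 : p.1 < j <;>
        simp [idMat, h1, h2, Nat.lt_min]
    · intro b _ hb
      simp [idMat, Matrix.of_apply, Ne.symm hb]
    · intro h; exact absurd (Finset.mem_univ p) h
  rw [Finset.sum_congr rfl fun p _ => e p, sum_ind (by omega)]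

def jm (n : ℕ) (B C : Matrix (Fin n) (Fin n) ℤ) (i j : ℕ) : ℤ :=
  min (rk n B i j) (rk n C i j)

def joinM (n : ℕ) (B C : Matrix (Fin n) (Fin n) ℤ) : Matrix (Fin n) (Fin n) ℤ :=
  Matrix.of fun p q =>
    jm n B C (p.1 + 1) (q.1 + 1) - jm n B C p.1 (q.1 + 1)
      - jm n B C (p.1 + 1) q.1 + jm n B C p.1 q.1

lemma jm_zero_left (j : ℕ) : jm n B C 0 j = 0 := by simp [jm, rk_zero_left]
lemma jm_zero_right (i : ℕ) : jm n B C i 0 = 0 := by simp [jm, rk_zero_right]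

lemma jm_cap_row {i : ℕ} (hi : n ≤ i) (j : ℕ) : jm n B C i j = jm n B C n j := by
  unfold jm; rw [rk_cap_row B hi, rk_cap_row C hi]

lemma jm_cap_col {j : ℕ} (hj : n ≤ j) (i : ℕ) : jm n B C i j = jm n B C i n := by
  unfold jm; rw [rk_cap_col B hj, rk_cap_col C hj]

lemma joinM_rowsum (i : Fin n) (j : ℕ) :
    (∑ q : Fin n, if q.1 < j then joinM n B C i q else 0)
      = jm n B C (i.1 + 1) (min j n) - jm n B C i.1 (min j n) := by
  have e : ∀ q : Fin n, (if q.1 < j then joinM n B C i q else 0)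
      = (if q.1 < j then ((fun t => jm n B C (i.1 + 1) t - jm n B C i.1 t) (q.1 + 1)
            - (fun t => jm n B C (i.1 + 1) t - jm n B C i.1 t) q.1) else 0) := by
    intro q
    by_cases h : q.1 < j <;> simp only [h, if_true, if_false]
    simp only [joinM, Matrix.of_apply]
    ring
  rw [Finset.sum_congr rfl fun q _ => e q,
    telescope (fun t => jm n B C (i.1 + 1) t - jm n B C i.1 t) j]
  rw [jm_zero_right, jm_zero_right]
  ring

lemma rk_joinM (i j : ℕ) : rk n (joinM n B C) i j = jm n B C i j := by
  induction i with
  | zero => rw [rk_zero_left, jm_zero_left]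
  | succ i ih =>
    rcases lt_or_ge i n with hi | hi
    · rw [rk_succ_row _ hi j, ih, joinM_rowsum ⟨i, hi⟩ j]
      rcases le_or_gt j n with hj | hj
      · have : min j n = j := by omega
        rw [this]; ring
      · have : min j n = n := by omega
        rw [this, jm_cap_col (le_of_lt hj) i, jm_cap_col (le_of_lt hj) (i + 1)]
        ring
    · rw [rk_cap_row _ (by omega : n ≤ i + 1) j, ← rk_cap_row _ hi j, ih,
        jm_cap_row (by omega : n ≤ i + 1) j, ← jm_cap_row hi j]

lemma joinM_transpose : (joinM n B C)ᵀ = joinM n Bᵀ Cᵀ := by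
  ext p q
  simp only [Matrix.transpose_apply, joinM, Matrix.of_apply, jm,
    rk_transpose]
  ring

lemma jm_row_step (hB : IsASM n B) (hC : IsASM n C) {i j : ℕ} (hi : i < n) (hj : j ≤ n) :
    jm n B C i j ≤ jm n B C (i + 1) j ∧ jm n B C (i + 1) j ≤ jm n B C i j + 1 := by
  have h1 := rk_row_step hB hi hj
  have h2 := rk_row_step hC hi hj
  unfold jm
  omega

lemma isASM_joinM_rows (hB : IsASM n B) (hC : IsASM n C) :
    (∀ i j, joinM n B C i j = -1 ∨ joinM n B C i j = 0 ∨ joinM n B C i j = 1) ∧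
    (∀ i : Fin n, ∀ j : ℕ, j ≤ n →
      (∑ q : Fin n, if q.1 < j then joinM n B C i q else 0) = 0 ∨
      (∑ q : Fin n, if q.1 < j then joinM n B C i q else 0) = 1) ∧
    (∀ i : Fin n, (∑ q : Fin n, joinM n B C i q) = 1) := by
  refine ⟨?_, ?_, ?_⟩
  · intro p q
    have h1 := jm_row_step hB hC p.2 (le_of_lt q.2)
    have h2 := jm_row_step hB hC (i := p.1) (j := q.1 + 1) p.2 (by omega)
    simp only [joinM, Matrix.of_apply]
    omega
  · intro i j hj
    rw [joinM_rowsum i j]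
    have hmin : min j n = j := by omega
    rw [hmin]
    rcases Nat.eq_zero_or_pos j with rfl | hj0
    · rw [jm_zero_right, jm_zero_right]; omega
    · have h := jm_row_step hB hC i.2 hj
      omega
  · intro i
    have h := joinM_rowsum (B := B) (C := C) i n
    rw [Finset.sum_congr rfl fun q _ => if_pos q.2] at h
    rw [h]
    have hmin : min n n = n := by omega
    rw [hmin]
    unfold jm
    rw [rk_row_full hB (le_of_lt i.2), rk_row_full hC (le_of_lt i.2),
      rk_row_full hB i.2, rk_row_full hC i.2]
    simp

lemma isASM_joinM (hB : IsASM n B) (hC : IsASM n C) : IsASM n (joinM n B C) := by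
  obtain ⟨e1, r1, r2⟩ := isASM_joinM_rows hB hC
  obtain ⟨_, c1, c2⟩ := isASM_joinM_rows (isASM_transpose hB) (isASM_transpose hC)
  rw [← joinM_transpose] at c1 c2
  refine ⟨e1, r1, ?_, r2, ?_⟩
  · intro j i hi
    simpa [Matrix.transpose_apply] using c1 j i hi
  · intro j
    simpa [Matrix.transpose_apply] using c2 j

end Aux18

/-- For any operators `π_i` (`i ∈ [n-1]`) acting on `ASM(n)` as in the paper (fixing all rows
of the rank matrix except row `i`, where the value becomes
`min (r_A(i-1,j)+1) (r_A(i+1,j))`), and any finite sequence `i_1, …, i_l` of indices in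
`[n-1]`, the image `S` of `π_{i_1} ∘ ⋯ ∘ π_{i_l}` on `ASM(n)`, with the induced Bruhat order,
is a lattice: joins computed in `ASM(n)` of elements of `S` lie in `S` (and are joins in `S`),
pairwise meets exist in `S`, and the identity matrix is the minimum element of `S`. -/
theorem stmt18 (n : ℕ) (hn : 1 ≤ n)
    (pi : ℕ → Matrix (Fin n) (Fin n) ℤ → Matrix (Fin n) (Fin n) ℤ)
    (hpi : ∀ i ∈ Finset.Icc 1 (n - 1), ∀ A, IsASM n A →
      IsASM n (pi i A) ∧
      (∀ a j, 1 ≤ a → a ≤ n → 1 ≤ j → j ≤ n → a ≠ i → rk n (pi i A) a j = rk n A a j) ∧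
      (∀ j, 1 ≤ j → j ≤ n →
        rk n (pi i A) i j = min (rk n A (i - 1) j + 1) (rk n A (i + 1) j)))
    (l : List ℕ) (hl : ∀ i ∈ l, i ∈ Finset.Icc 1 (n - 1))
    (S : Set (Matrix (Fin n) (Fin n) ℤ))
    (hS : S = {B | ∃ A, IsASM n A ∧
      B = (l.foldr (fun i g => pi i ∘ g) (id : Matrix (Fin n) (Fin n) ℤ → _)) A}) :
    (∀ B ∈ S, IsASM n B) ∧
    (idMat n ∈ S ∧ ∀ B ∈ S, blE n (idMat n) B) ∧
    (∀ B ∈ S, ∀ C ∈ S, ∀ D, IsASM n D → blE n B D → blE n C D →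
      (∀ E, IsASM n E → blE n B E → blE n C E → blE n D E) → D ∈ S) ∧
    (∀ B ∈ S, ∀ C ∈ S, ∃ J ∈ S, blE n B J ∧ blE n C J ∧
      ∀ F ∈ S, blE n B F → blE n C F → blE n J F) ∧
    (∀ B ∈ S, ∀ C ∈ S, ∃ E ∈ S, blE n E B ∧ blE n E C ∧
      ∀ F ∈ S, blE n F B → blE n F C → blE n F E) := by
  classical
  subst hS
  open Aux18 in
  -- notation
  have hIcc : ∀ i ∈ Finset.Icc 1 (n - 1), 1 ≤ i ∧ i + 1 ≤ n := by
    intro i hi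
    have := Finset.mem_Icc.mp hi
    omega
  -- pi fixes the identity
  have pi_id : ∀ i ∈ Finset.Icc 1 (n - 1), pi i (idMat n) = idMat n := by
    intro i hi
    obtain ⟨hi1, hi2⟩ := hIcc i hi
    obtain ⟨h1, h2, h3⟩ := hpi i hi (idMat n) isASM_idMat
    apply rk_ext
    intro a j ha hj
    rcases Nat.eq_zero_or_pos a with rfl | ha1
    · rw [rk_zero_left, rk_zero_left]
    rcases Nat.eq_zero_or_pos j with rfl | hj1
    · rw [rk_zero_right, rk_zero_right]
    by_cases hai : a = i
    · subst hai
      rw [h3 j hj1 hj, rk_idMat (by omega) hj, rk_idMat (by omega) hj,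
        rk_idMat (by omega) hj]
      push_cast [Nat.cast_min]
      omega
    · exact h2 a j ha1 ha hj1 hj hai
  -- pi commutes with joins
  have pi_join : ∀ i ∈ Finset.Icc 1 (n - 1), ∀ A B, IsASM n A → IsASM n B →
      pi i (joinM n A B) = joinM n (pi i A) (pi i B) := by
    intro i hi A B hA hB
    obtain ⟨hi1, hi2⟩ := hIcc i hi
    obtain ⟨hJ1, hJ2, hJ3⟩ := hpi i hi (joinM n A B) (isASM_joinM hA hB)
    obtain ⟨hA1, hA2, hA3⟩ := hpi i hi A hA
    obtain ⟨hB1, hB2, hB3⟩ := hpi i hi B hB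
    apply rk_ext
    intro a j ha hj
    rcases Nat.eq_zero_or_pos a with rfl | ha1
    · rw [rk_zero_left, rk_zero_left]
    rcases Nat.eq_zero_or_pos j with rfl | hj1
    · rw [rk_zero_right, rk_zero_right]
    by_cases hai : a = i
    · subst hai
      rw [hJ3 j hj1 hj, rk_joinM, rk_joinM, rk_joinM]
      unfold Aux18.jm
      rw [hA3 j hj1 hj, hB3 j hj1 hj]
      omega
    · rw [hJ2 a j ha1 ha hj1 hj hai, rk_joinM, rk_joinM]
      unfold Aux18.jm
      rw [hA2 a j ha1 ha hj1 hj hai, hB2 a j ha1 ha hj1 hj hai]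
  -- the composite operator
  have G_all : ∀ L : List ℕ, (∀ i ∈ L, i ∈ Finset.Icc 1 (n - 1)) →
      (∀ A, IsASM n A →
        IsASM n ((L.foldr (fun i g => pi i ∘ g) (id : Matrix (Fin n) (Fin n) ℤ → _)) A)) ∧
      ((L.foldr (fun i g => pi i ∘ g) (id : Matrix (Fin n) (Fin n) ℤ → _)) (idMat n) = idMat n) ∧
      (∀ A B, IsASM n A → IsASM n B →
        (L.foldr (fun i g => pi i ∘ g) (id : Matrix (Fin n) (Fin n) ℤ → _)) (joinM n A B)
          = joinM n ((L.foldr (fun i g => pi i ∘ g) (id : Matrix (Fin n) (Fin n) ℤ → _)) A)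
              ((L.foldr (fun i g => pi i ∘ g) (id : Matrix (Fin n) (Fin n) ℤ → _)) B)) := by
    intro L
    induction L with
    | nil => exact fun _ => ⟨fun A hA => hA, rfl, fun A B _ _ => rfl⟩
    | cons i L ih =>
      intro hmem
      have hi : i ∈ Finset.Icc 1 (n - 1) := hmem i List.mem_cons_self
      obtain ⟨ihA, ihId, ihJ⟩ := ih (fun t ht => hmem t (List.mem_cons_of_mem i ht))
      refine ⟨?_, ?_, ?_⟩
      · intro A hA
        simp only [List.foldr_cons, Function.comp_apply]
        exact (hpi i hi _ (ihA A hA)).1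
      · simp only [List.foldr_cons, Function.comp_apply]
        rw [ihId]
        exact pi_id i hi
      · intro A B hA hB
        simp only [List.foldr_cons, Function.comp_apply]
        rw [ihJ A B hA hB]
        exact pi_join i hi _ _ (ihA A hA) (ihA B hB)
  obtain ⟨GA, GId, GJ⟩ := G_all l hl
  set S : Set (Matrix (Fin n) (Fin n) ℤ) := {B | ∃ A, IsASM n A ∧
      B = (l.foldr (fun i g => pi i ∘ g) (id : Matrix (Fin n) (Fin n) ℤ → _)) A} with hSdef
  have S_asm : ∀ B ∈ S, IsASM n B := by
    rintro B ⟨A, hA, rfl⟩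
    exact GA A hA
  have id_mem : idMat n ∈ S := ⟨idMat n, isASM_idMat, GId.symm⟩
  have blE_id : ∀ B, IsASM n B → blE n (idMat n) B := by
    intro B hB i j h1 h2 h3 h4
    rw [rk_idMat h2 h4]
    have := rk_le_min hB h2 h4
    push_cast [Nat.cast_min]
    omega
  have join_mem : ∀ B ∈ S, ∀ C ∈ S, joinM n B C ∈ S := by
    rintro B ⟨A1, hA1, rfl⟩ C ⟨A2, hA2, rfl⟩
    exact ⟨joinM n A1 A2, isASM_joinM hA1 hA2, (GJ A1 A2 hA1 hA2).symm⟩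
  have blE_left : ∀ B C, blE n B (joinM n B C) := by
    intro B C i j _ _ _ _
    rw [rk_joinM]
    exact min_le_left _ _
  have blE_right : ∀ B C, blE n C (joinM n B C) := by
    intro B C i j _ _ _ _
    rw [rk_joinM]
    exact min_le_right _ _
  have blE_lub : ∀ B C D, blE n B D → blE n C D → blE n (joinM n B C) D := by
    intro B C D h1 h2 i j a b c d
    rw [rk_joinM]
    exact le_min (h1 i j a b c d) (h2 i j a b c d)
  have antisymm : ∀ B C : Matrix (Fin n) (Fin n) ℤ, blE n B C → blE n C B → B = C := by
    intro B C h1 h2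
    apply rk_ext
    intro i j hi hj
    rcases Nat.eq_zero_or_pos i with rfl | hi1
    · rw [rk_zero_left, rk_zero_left]
    rcases Nat.eq_zero_or_pos j with rfl | hj1
    · rw [rk_zero_right, rk_zero_right]
    exact le_antisymm (h2 i j hi1 hi hj1 hj) (h1 i j hi1 hi hj1 hj)
  refine ⟨S_asm, ⟨id_mem, fun B hB => blE_id B (S_asm B hB)⟩, ?_, ?_, ?_⟩
  · -- join closure
    intro B hB C hC D hD hBD hCD huniv
    have h1 : blE n (joinM n B C) D := blE_lub B C D hBD hCD
    have h2 : blE n D (joinM n B C) :=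
      huniv _ (isASM_joinM (S_asm B hB) (S_asm C hC)) (blE_left B C) (blE_right B C)
    rw [antisymm D (joinM n B C) h2 h1]
    exact join_mem B hB C hC
  · -- joins exist
    intro B hB C hC
    exact ⟨joinM n B C, join_mem B hB C hC, blE_left B C, blE_right B C,
      fun F _ h1 h2 => blE_lub B C F h1 h2⟩
  · -- meets exist
    intro B hB C hC
    have hfin : S.Finite := by
      have hsub : S ⊆ Set.range (fun f : Fin n → Fin n → Fin 3 =>
          (Matrix.of fun i j => ((f i j : ℕ) : ℤ) - 1 : Matrix (Fin n) (Fin n) ℤ)) := by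
        intro X hX
        have hX' := S_asm X hX
        refine ⟨fun i j => if X i j = -1 then 0 else if X i j = 0 then 1 else 2, ?_⟩
        apply Matrix.ext
        intro i j
        simp only [Matrix.of_apply]
        rcases hX'.1 i j with h | h | h <;> simp [h]
      exact Set.Finite.subset (Set.finite_range _) hsub
    have hLfin : {F | F ∈ S ∧ blE n F B ∧ blE n F C}.Finite :=
      hfin.subset (fun x hx => hx.1)
    have key : ∀ lst : List (Matrix (Fin n) (Fin n) ℤ),
        (∀ F ∈ lst, F ∈ S ∧ blE n F B ∧ blE n F C) →
        ∃ E ∈ S, blE n E B ∧ blE n E C ∧ ∀ F ∈ lst, blE n F E := by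
      intro lst
      induction lst with
      | nil =>
        exact fun _ => ⟨idMat n, id_mem, blE_id B (S_asm B hB), blE_id C (S_asm C hC),
          by simp⟩
      | cons F0 t ih =>
        intro hmem
        obtain ⟨E, hES, hEB, hEC, hub⟩ := ih (fun F hF => hmem F (List.mem_cons_of_mem _ hF))
        obtain ⟨hF0S, hF0B, hF0C⟩ := hmem F0 List.mem_cons_self
        refine ⟨joinM n F0 E, join_mem F0 hF0S E hES,
          blE_lub F0 E B hF0B hEB, blE_lub F0 E C hF0C hEC, ?_⟩
        intro F hF
        rcases List.mem_cons.mp hF with rfl | hF'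
        · exact blE_left F E
        · intro i j a b c d
          exact le_trans (blE_right F0 E i j a b c d) (hub F hF' i j a b c d)
    obtain ⟨E, hES, hEB, hEC, hub⟩ := key hLfin.toFinset.toList
      (fun F hF => by
        have : F ∈ hLfin.toFinset := Finset.mem_toList.mp hF
        rw [Set.Finite.mem_toFinset] at this
        exact this)
    refine ⟨E, hES, hEB, hEC, ?_⟩
    intro F hF h1 h2
    exact hub F (by
      rw [Finset.mem_toList, Set.Finite.mem_toFinset]
      exact ⟨hF, h1, h2⟩)
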